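/- For every nondegenerate pseudo-complex fundamental graded Lie algebra (m = g_{−l} ⊕ ⋯ ⊕ g_{−1}, I), the complex subspace n := ((g_{−l} ⊕ ⋯ ⊕ g_{−2}) ⊗_ℝ ℂ) ⊕ g^{10} is a Lie ideal of the complexification m ⊗_ℝ ℂ, and m ⊗_ℝ ℂ = n ⊕ g^{01} as a direct sum of complex vector spaces. -/

import Mathlib

noncomputable section

open scoped TensorProduct

universe u

/-- Formal carrier for elements of the Tanaka prolongation spaces: `low v` represents an
element `v` of the negatively graded part (inside `m`), while `high F` represents a family
`(f_j)_{1 ≤ j ≤ l}` of maps `f_j : g_{-j} → g_{i-j}` (the component `f_j` is `F ⟨j-1, _⟩`). -/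
inductive FP (m : Type u) (l : ℕ) : Type u
  | low : m → FP m l
  | high : (Fin l → m → FP m l) → FP m l

namespace FP

variable {m : Type u} {l : ℕ} [LieRing m] [LieAlgebra ℝ m]

/-- Pointwise addition of formal prolongation elements (of the same degree). -/
def add : FP m l → FP m l → FP m l
  | low x, low y => low (x + y)
  | high F, high G => high fun j X => add (F j X) (G j X)
  | x, _ => x

/-- Pointwise negation. -/
def neg : FP m l → FP m l
  | low x => low (-x)
  | high F => high fun j X => neg (F j X)

/-- Pointwise scalar multiplication. -/
def smulR (c : ℝ) : FP m l → FP m l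
  | low x => low (c • x)
  | high F => high fun j X => smulR c (F j X)

/-- The mixed bracket `[h, W]` of a prolongation element `h` with `W ∈ g_{-(j+1)}`:
for `h` of negative degree it is the Lie bracket in `m`; for `h` of degree `k ≥ 0`
it is the evaluation `h(W)` of the component of `h` on `g_{-(j+1)}`. -/
def br (j : Fin l) : FP m l → m → FP m l
  | low x, W => low ⁅x, W⁆
  | high F, W => F j W

variable (g : ℤ → Submodule ℝ m)

/-- The two formal elements represent the same prolongation element (equality of the
underlying families of linear maps, i.e. equality of all values on the relevant domains). -/
def Eqv : FP m l → FP m l → Prop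
  | low x, low y => x = y
  | high F, high G => ∀ j : Fin l, ∀ X ∈ g (-(j + 1) : ℤ), Eqv (F j X) (G j X)
  | _, _ => False

/-- The formal element represents the zero element (the zero vector, resp. the family of
zero linear maps). -/
def IsZero : FP m l → Prop
  | low x => x = 0
  | high F => ∀ j : Fin l, ∀ X ∈ g (-(j + 1) : ℤ), IsZero (F j X)

/-- `Mem g I d x` : the formal element `x` is a member of the degree-`d` space of the
Tanaka prolongation of `(m = g_{-l} ⊕ ⋯ ⊕ g_{-1}, I)`.  For `d < 0` this is the space
`g_d`; for `d ≥ 0` it is the prolongation space defined inductively: a family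
`(f_j : g_{-j} → g_{d-j})_{1 ≤ j ≤ l}` of `ℝ`-linear maps (with values in `g_{d-j}`,
resp. in the previously defined prolongation space when `d - j ≥ 0`) satisfying the
Leibniz rule `f [X, Y] = [f X, Y] + [X, f Y]` for all homogeneous `X, Y ∈ m` (where the
bracket of a nonnegative degree element `h` with `W ∈ g_{-j}` is the evaluation `h(W)`,
and `[W, h] = -[h, W]`), and, in degree `0`, commuting with the complex structure `I`
on `g_{-1}` (a degree-`0` element is precisely a grading-preserving derivation of `m`,
recorded through its components `g_{-j} → g_{-j}`). -/
def Mem (I : ↥(g (-1)) →ₗ[ℝ] ↥(g (-1))) : ℤ → FP m l → Prop := fun d x =>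
  if 0 ≤ d then
    ∃ F : Fin l → m → FP m l, x = high F ∧
      (∀ j : Fin l,
        (∀ X ∈ g (-(j + 1) : ℤ), Mem I (d - (j + 1)) (F j X)) ∧
        (∀ X ∈ g (-(j + 1) : ℤ), ∀ Y ∈ g (-(j + 1) : ℤ),
          Eqv g (F j (X + Y)) (add (F j X) (F j Y))) ∧
        (∀ c : ℝ, ∀ X ∈ g (-(j + 1) : ℤ), Eqv g (F j (c • X)) (smulR c (F j X)))) ∧
      (∀ j j' : Fin l, ∀ X ∈ g (-(j + 1) : ℤ), ∀ Y ∈ g (-(j' + 1) : ℤ),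
        (∀ h : (j : ℕ) + (j' : ℕ) + 1 < l,
          Eqv g (F ⟨(j : ℕ) + (j' : ℕ) + 1, h⟩ ⁅X, Y⁆)
            (add (br j' (F j X) Y) (neg (br j (F j' Y) X)))) ∧
        (l ≤ (j : ℕ) + (j' : ℕ) + 1 →
          IsZero g (add (br j' (F j X) Y) (neg (br j (F j' Y) X))))) ∧
      (d = 0 → ∀ j : Fin l, (j : ℕ) = 0 → ∀ X v : ↥(g (-1)),
        Eqv g (F j (X : m)) (low (v : m)) →
          Eqv g (F j ((I X : ↥(g (-1))) : m)) (low ((I v : ↥(g (-1))) : m)))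
  else ∃ v : m, x = low v ∧ v ∈ g d
termination_by d _ => (d + 1).toNat
decreasing_by omega

end FP

/-- A nondegenerate pseudo-complex fundamental graded Lie algebra of type `l`:
a finite-dimensional real Lie algebra `m` with an internal grading
`m = g_{-l} ⊕ ⋯ ⊕ g_{-1}` (all other components being trivial), whose bracket respects
the grading, which is generated as a Lie algebra by `g_{-1}`, with `g_{-l} ≠ 0`,
together with a complex structure `I` on `g_{-1}` satisfying `[IX, IY] = [X, Y]`,
and which is Levi-nondegenerate. -/
structure IsPCF {m : Type u} [LieRing m] [LieAlgebra ℝ m] (l : ℕ)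
    (g : ℤ → Submodule ℝ m) (I : ↥(g (-1)) →ₗ[ℝ] ↥(g (-1))) : Prop where
  findim : FiniteDimensional ℝ m
  isInternal : DirectSum.IsInternal fun i : ℤ => g i
  supp : ∀ i : ℤ, ¬(-(l : ℤ) ≤ i ∧ i ≤ -1) → g i = ⊥
  grading : ∀ i j : ℤ, ∀ x ∈ g i, ∀ y ∈ g j, ⁅x, y⁆ ∈ g (i + j)
  nontriv : g (-(l : ℤ)) ≠ ⊥
  generated : LieSubalgebra.lieSpan ℝ m (g (-1) : Set m) = ⊤
  I_sq : ∀ X : ↥(g (-1)), I (I X) = -X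
  I_br : ∀ X Y : ↥(g (-1)),
    ⁅((I X : ↥(g (-1))) : m), ((I Y : ↥(g (-1))) : m)⁆ = ⁅(X : m), (Y : m)⁆
  nondeg : ∀ X : ↥(g (-1)), (∀ Y : ↥(g (-1)), ⁅(X : m), (Y : m)⁆ = 0) → X = 0

/-- The subset `g^{10} = {X ⊗ 1 - (I X) ⊗ i : X ∈ g_{-1}}` of the complexification. -/
def g10 {m : Type} [LieRing m] [LieAlgebra ℝ m] (g : ℤ → Submodule ℝ m)
    (I : ↥(g (-1)) →ₗ[ℝ] ↥(g (-1))) : Set (ℂ ⊗[ℝ] m) :=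
  {y | ∃ X : ↥(g (-1)),
    y = (1 : ℂ) ⊗ₜ[ℝ] (X : m) - Complex.I ⊗ₜ[ℝ] ((I X : ↥(g (-1))) : m)}

/-- The subset `g^{01} = {X ⊗ 1 + (I X) ⊗ i : X ∈ g_{-1}}` of the complexification. -/
def g01 {m : Type} [LieRing m] [LieAlgebra ℝ m] (g : ℤ → Submodule ℝ m)
    (I : ↥(g (-1)) →ₗ[ℝ] ↥(g (-1))) : Set (ℂ ⊗[ℝ] m) :=
  {y | ∃ X : ↥(g (-1)),
    y = (1 : ℂ) ⊗ₜ[ℝ] (X : m) + Complex.I ⊗ₜ[ℝ] ((I X : ↥(g (-1))) : m)}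

/-- The complex subspace `n := ((g_{-l} ⊕ ⋯ ⊕ g_{-2}) ⊗_ℝ ℂ) ⊕ g^{10}` of the
complexification `m ⊗_ℝ ℂ`. -/
def nSub {m : Type} [LieRing m] [LieAlgebra ℝ m] (g : ℤ → Submodule ℝ m)
    (I : ↥(g (-1)) →ₗ[ℝ] ↥(g (-1))) : Submodule ℂ (ℂ ⊗[ℝ] m) :=
  Submodule.baseChange ℂ (⨆ i : ℤ, ⨆ _ : i ≤ -2, g i) ⊔ Submodule.span ℂ (g10 g I)

/-- For every nondegenerate pseudo-complex fundamental graded Lie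
algebra `(m = g_{-l} ⊕ ⋯ ⊕ g_{-1}, I)`, the complex subspace
`n := ((g_{-l} ⊕ ⋯ ⊕ g_{-2}) ⊗_ℝ ℂ) ⊕ g^{10}` is a Lie ideal of the complexification
`m ⊗_ℝ ℂ`, and `m ⊗_ℝ ℂ = n ⊕ g^{01}` as a direct sum of complex vector spaces. -/
theorem nSub_isIdeal_and_compl
    (l : ℕ) (m : Type) [LieRing m] [LieAlgebra ℝ m]
    (g : ℤ → Submodule ℝ m) (I : ↥(g (-1)) →ₗ[ℝ] ↥(g (-1)))
    (hpcf : IsPCF l g I) :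
    (∀ x : ℂ ⊗[ℝ] m, ∀ y ∈ nSub g I, ⁅x, y⁆ ∈ nSub g I) ∧
      IsCompl (nSub g I) (Submodule.span ℂ (g01 g I)) := by
  classical
  obtain ⟨hfd, hint, hsupp, hgrad, hnt, hgen, hIsq, hIbr, hnd⟩ := hpcf
  set G2 : Submodule ℝ m := ⨆ i : ℤ, ⨆ _ : i ≤ -2, g i with hG2
  have hmemG2 : ∀ i : ℤ, i ≤ -2 → ∀ v ∈ g i, v ∈ G2 := by
    intro i hi v hv
    exact Submodule.mem_iSup_of_mem i (Submodule.mem_iSup_of_mem hi hv)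
  have htop : (⨆ i : ℤ, g i) = ⊤ := hint.submodule_iSup_eq_top
  -- bracket of anything with an element of degree ≤ -1 lands in G2
  have hbr : ∀ i : ℤ, i ≤ -1 → ∀ v ∈ g i, ∀ u : m, ⁅u, v⁆ ∈ G2 := by
    intro i hi v hv u
    have hu : u ∈ ⨆ j : ℤ, g j := htop ▸ Submodule.mem_top
    refine Submodule.iSup_induction (motive := fun u => ⁅u, v⁆ ∈ G2) _ hu ?_ (by simp) ?_
    · intro j u hu
      by_cases hj : -(l : ℤ) ≤ j ∧ j ≤ -1
      · exact hmemG2 (j + i) (by omega) _ (hgrad j i u hu v hv)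
      · rw [hsupp j hj, Submodule.mem_bot] at hu
        simp [hu]
    · intro a b ha hb; rw [show ⁅a + b, v⁆ = ⁅a, v⁆ + ⁅b, v⁆ from add_lie a b v]; exact add_mem ha hb
  have hbrG2 : ∀ v ∈ G2, ∀ u : m, ⁅u, v⁆ ∈ G2 := by
    intro v hv
    refine Submodule.iSup_induction (motive := fun v => ∀ u : m, ⁅u, v⁆ ∈ G2) _ hv ?_ (by simp) ?_
    · intro i v hv u
      by_cases hi : i ≤ -2
      · rw [iSup_pos hi] at hv
        exact hbr i (by omega) v hv u
      · rw [iSup_neg hi, Submodule.mem_bot] at hv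
        simp [hv]
    · intro a b ha hb u; rw [show ⁅u, a + b⁆ = ⁅u, a⁆ + ⁅u, b⁆ from lie_add u a b]; exact add_mem (ha u) (hb u)
  have htens : ∀ (z : ℂ) (v : m), (∀ u : m, ⁅u, v⁆ ∈ G2) → ∀ x : ℂ ⊗[ℝ] m,
      ⁅x, z ⊗ₜ[ℝ] v⁆ ∈ Submodule.baseChange ℂ G2 := by
    intro z v hv x
    induction x using TensorProduct.induction_on with
    | zero => rw [show ⁅(0 : ℂ ⊗[ℝ] m), z ⊗ₜ[ℝ] v⁆ = 0 from zero_lie _]; exact zero_mem _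
    | tmul z' u =>
        rw [LieAlgebra.ExtendScalars.bracket_tmul]
        exact Submodule.tmul_mem_baseChange_of_mem _ (hv u)
    | add a b ha hb =>
        rw [show ⁅a + b, z ⊗ₜ[ℝ] v⁆ = ⁅a, z ⊗ₜ[ℝ] v⁆ + ⁅b, z ⊗ₜ[ℝ] v⁆ from add_lie a b _]
        exact add_mem ha hb
  have hideal : ∀ y ∈ nSub g I, ∀ x : ℂ ⊗[ℝ] m, ⁅x, y⁆ ∈ Submodule.baseChange ℂ G2 := by
    intro y hy x
    obtain ⟨y₁, h₁, y₂, h₂, rfl⟩ := Submodule.mem_sup.mp hy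
    rw [show ⁅x, y₁ + y₂⁆ = ⁅x, y₁⁆ + ⁅x, y₂⁆ from lie_add x y₁ y₂]
    refine add_mem ?_ ?_
    · have h₁' : y₁ ∈ Submodule.span ℂ
          (↑(G2.map (TensorProduct.mk ℝ ℂ m 1)) : Set (ℂ ⊗[ℝ] m)) := by
          rw [← Submodule.baseChange_eq_span]; exact h₁
      refine Submodule.span_induction ?_
        (by rw [show ⁅x, (0 : ℂ ⊗[ℝ] m)⁆ = 0 from lie_zero x]; exact zero_mem _) ?_ ?_ h₁'
      · rintro y ⟨v, hv, rfl⟩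
        exact htens 1 v (hbrG2 v hv) x
      · intro a b _ _ ha hb
        rw [show ⁅x, a + b⁆ = ⁅x, a⁆ + ⁅x, b⁆ from lie_add x a b]; exact add_mem ha hb
      · intro c a _ ha
        rw [show ⁅x, c • a⁆ = c • ⁅x, a⁆ from lie_smul c x a]; exact Submodule.smul_mem _ c ha
    · refine Submodule.span_induction ?_
        (by rw [show ⁅x, (0 : ℂ ⊗[ℝ] m)⁆ = 0 from lie_zero x]; exact zero_mem _) ?_ ?_ h₂
      · rintro y ⟨X, rfl⟩
        rw [show ⁅x, (1 : ℂ) ⊗ₜ[ℝ] (X : m) - Complex.I ⊗ₜ[ℝ] ((I X : ↥(g (-1))) : m)⁆ =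
          ⁅x, (1 : ℂ) ⊗ₜ[ℝ] (X : m)⁆ - ⁅x, Complex.I ⊗ₜ[ℝ] ((I X : ↥(g (-1))) : m)⁆ from
          lie_sub x _ _]
        exact sub_mem (htens 1 _ (hbr (-1) (by norm_num) _ X.2) x)
          (htens Complex.I _ (hbr (-1) (by norm_num) _ (I X).2) x)
      · intro a b _ _ ha hb
        rw [show ⁅x, a + b⁆ = ⁅x, a⁆ + ⁅x, b⁆ from lie_add x a b]; exact add_mem ha hb
      · intro c a _ ha
        rw [show ⁅x, c • a⁆ = c • ⁅x, a⁆ from lie_smul c x a]; exact Submodule.smul_mem _ c ha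
  -- the projection onto g (-1)
  set e := LinearEquiv.ofBijective (DirectSum.coeLinearMap fun i : ℤ => g i) hint with he
  set pr : m →ₗ[ℝ] ↥(g (-1)) :=
    (DirectSum.component ℝ ℤ (fun i : ℤ => ↥(g i)) (-1)) ∘ₗ e.symm.toLinearMap with hprdef
  have hpr_ne : ∀ i : ℤ, i ≠ -1 → ∀ v ∈ g i, pr v = 0 := by
    intro i hi v hv
    have h0 : (e.symm v) (-1) = 0 := hint.ofBijective_coeLinearMap_of_mem_ne hi hv
    show DirectSum.component ℝ ℤ (fun i : ℤ => ↥(g i)) (-1) (e.symm v) = 0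
    rw [← DirectSum.apply_eq_component]; exact h0
  have hpr_eq : ∀ v : m, ∀ hv : v ∈ g (-1), pr v = ⟨v, hv⟩ := by
    intro v hv
    have h0 : (e.symm v) (-1) = ⟨v, hv⟩ := hint.ofBijective_coeLinearMap_of_mem hv
    show DirectSum.component ℝ ℤ (fun i : ℤ => ↥(g i)) (-1) (e.symm v) = ⟨v, hv⟩
    rw [← DirectSum.apply_eq_component]; exact h0
  set p : m →ₗ[ℝ] m := (g (-1)).subtype ∘ₗ pr with hp
  set fI : m →ₗ[ℝ] m := (g (-1)).subtype ∘ₗ I ∘ₗ pr with hfI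
  set Φ : ℂ ⊗[ℝ] m →ₗ[ℂ] ℂ ⊗[ℝ] m :=
    LinearMap.baseChange ℂ fI - Complex.I • LinearMap.baseChange ℂ p with hΦ
  have hΦ_tmul : ∀ (z : ℂ) (v : m),
      Φ (z ⊗ₜ[ℝ] v) = z ⊗ₜ[ℝ] (fI v) - (Complex.I * z) ⊗ₜ[ℝ] (p v) := by
    intro z v
    rw [hΦ]
    simp [LinearMap.baseChange_tmul, TensorProduct.smul_tmul', smul_eq_mul]
  have hker : nSub g I ≤ LinearMap.ker Φ := by
    refine sup_le ?_ ?_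
    · rw [Submodule.baseChange_eq_span]
      rw [Submodule.span_le]
      rintro w ⟨v, hv, rfl⟩
      have hv0 : pr v = 0 := by
        refine Submodule.iSup_induction (motive := fun v => pr v = 0) _ hv ?_ (map_zero pr) ?_
        · intro i v hv
          by_cases hi : i ≤ -2
          · rw [iSup_pos hi] at hv
            exact hpr_ne i (by omega) v hv
          · rw [iSup_neg hi, Submodule.mem_bot] at hv
            simp [hv]
        · intro a b ha hb; rw [map_add, ha, hb, add_zero]
      have hfIv : fI v = 0 := by rw [hfI]; simp [hv0]
      have hpv : p v = 0 := by rw [hp]; simp [hv0]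
      simp only [LinearMap.mem_ker, SetLike.mem_coe, TensorProduct.mk_apply]
      rw [hΦ_tmul, hfIv, hpv, TensorProduct.tmul_zero, TensorProduct.tmul_zero, sub_zero]
    · rw [Submodule.span_le]
      rintro w ⟨X, rfl⟩
      have h1 : pr (X : m) = X := by rw [hpr_eq _ X.2]
      have h2 : pr ((I X : ↥(g (-1))) : m) = I X := by rw [hpr_eq _ (I X).2]
      have hfI1 : fI ((X : m)) = ((I X : ↥(g (-1))) : m) := by rw [hfI]; simp [h1]
      have hfI2 : fI ((I X : ↥(g (-1))) : m) = -(X : m) := by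
        rw [hfI]; simp [h2, hIsq]
      have hp1 : p ((X : m)) = (X : m) := by rw [hp]; simp [h1]
      have hp2 : p ((I X : ↥(g (-1))) : m) = ((I X : ↥(g (-1))) : m) := by
        rw [hp]; simp [h2]
      simp only [LinearMap.mem_ker, SetLike.mem_coe, map_sub]
      rw [hΦ_tmul, hΦ_tmul, hfI1, hfI2, hp1, hp2, mul_one, TensorProduct.tmul_neg,
        Complex.I_mul_I, TensorProduct.neg_tmul]
      abel
  have hΦ01 : ∀ w ∈ Submodule.span ℂ (g01 g I), Φ w = ((-2 : ℂ) * Complex.I) • w := by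
    intro w hw
    refine Submodule.span_induction ?_ (by simp) ?_ ?_ hw
    · rintro w ⟨X, rfl⟩
      have h1 : pr (X : m) = X := by rw [hpr_eq _ X.2]
      have h2 : pr ((I X : ↥(g (-1))) : m) = I X := by rw [hpr_eq _ (I X).2]
      have hfI1 : fI ((X : m)) = ((I X : ↥(g (-1))) : m) := by rw [hfI]; simp [h1]
      have hfI2 : fI ((I X : ↥(g (-1))) : m) = -(X : m) := by
        rw [hfI]; simp [h2, hIsq]
      have hp1 : p ((X : m)) = (X : m) := by rw [hp]; simp [h1]
      have hp2 : p ((I X : ↥(g (-1))) : m) = ((I X : ↥(g (-1))) : m) := by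
        rw [hp]; simp [h2]
      rw [map_add, hΦ_tmul, hΦ_tmul, hfI1, hfI2, hp1, hp2, mul_one, Complex.I_mul_I,
        TensorProduct.tmul_neg, TensorProduct.neg_tmul, smul_add,
        TensorProduct.smul_tmul', TensorProduct.smul_tmul', smul_eq_mul, smul_eq_mul, mul_one]
      rw [show (-2 : ℂ) * Complex.I * Complex.I = 1 + 1 by
        rw [mul_assoc, Complex.I_mul_I]; ring]
      rw [show ((-2 : ℂ) * Complex.I) = -Complex.I + -Complex.I by ring]
      rw [TensorProduct.add_tmul, TensorProduct.add_tmul, TensorProduct.neg_tmul]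
      abel
    · intro a b _ _ ha hb; rw [map_add, ha, hb, smul_add]
    · intro c a _ ha; rw [map_smul, ha, smul_comm]
  have hdisj : Disjoint (nSub g I) (Submodule.span ℂ (g01 g I)) := by
    rw [Submodule.disjoint_def]
    intro w h1 h2
    have e1 : Φ w = 0 := LinearMap.mem_ker.mp (hker h1)
    have e2 : ((-2 : ℂ) * Complex.I) • w = 0 := by rw [← hΦ01 w h2]; exact e1
    have hc : ((-2 : ℂ) * Complex.I) ≠ 0 := by
      simp [Complex.I_ne_zero]
    exact (smul_eq_zero.mp e2).resolve_left hc
  have hcod : Codisjoint (nSub g I) (Submodule.span ℂ (g01 g I)) := by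
    rw [codisjoint_iff_le_sup]
    intro x hxtriv
    clear hxtriv
    induction x using TensorProduct.induction_on with
    | zero => exact zero_mem _
    | add a b ha hb => exact add_mem ha hb
    | tmul z u =>
      have hu : (1 : ℂ) ⊗ₜ[ℝ] u ∈ nSub g I ⊔ Submodule.span ℂ (g01 g I) := by
        have humem : u ∈ ⨆ i : ℤ, g i := htop ▸ Submodule.mem_top
        refine Submodule.iSup_induction
          (motive := fun u => (1 : ℂ) ⊗ₜ[ℝ] u ∈ nSub g I ⊔ Submodule.span ℂ (g01 g I)) _ humem
          ?_ (by simp) ?_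
        · intro i u hui
          by_cases hi2 : i ≤ -2
          · exact Submodule.mem_sup_left (Submodule.mem_sup_left
              (Submodule.tmul_mem_baseChange_of_mem 1 (hmemG2 i hi2 u hui)))
          · by_cases hi : -(l : ℤ) ≤ i ∧ i ≤ -1
            · have hieq : i = -1 := by omega
              subst hieq
              set X : ↥(g (-1)) := ⟨u, hui⟩ with hX
              have key : (1 : ℂ) ⊗ₜ[ℝ] u = (2⁻¹ : ℂ) •
                  (((1 : ℂ) ⊗ₜ[ℝ] (X : m) - Complex.I ⊗ₜ[ℝ] ((I X : ↥(g (-1))) : m)) +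
                   ((1 : ℂ) ⊗ₜ[ℝ] (X : m) + Complex.I ⊗ₜ[ℝ] ((I X : ↥(g (-1))) : m))) := by
                rw [show ((1 : ℂ) ⊗ₜ[ℝ] (X : m) - Complex.I ⊗ₜ[ℝ] ((I X : ↥(g (-1))) : m)) +
                    ((1 : ℂ) ⊗ₜ[ℝ] (X : m) + Complex.I ⊗ₜ[ℝ] ((I X : ↥(g (-1))) : m)) =
                    (2 : ℂ) • ((1 : ℂ) ⊗ₜ[ℝ] (X : m)) by rw [two_smul]; abel]
                rw [smul_smul]
                norm_num
                rfl
              rw [key]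
              exact Submodule.smul_mem _ _ (add_mem
                (Submodule.mem_sup_left (Submodule.mem_sup_right
                  (Submodule.subset_span ⟨X, rfl⟩)))
                (Submodule.mem_sup_right (Submodule.subset_span ⟨X, rfl⟩)))
            · rw [hsupp i hi, Submodule.mem_bot] at hui
              simp [hui]
        · intro a b ha hb; rw [TensorProduct.tmul_add]; exact add_mem ha hb
      have hz : z ⊗ₜ[ℝ] u = z • ((1 : ℂ) ⊗ₜ[ℝ] u) := by
        rw [TensorProduct.smul_tmul', smul_eq_mul, mul_one]
      rw [hz]
      exact Submodule.smul_mem _ z hu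
  exact ⟨fun x y hy => Submodule.mem_sup_left (hideal y hy x), ⟨hdisj, hcod⟩⟩

end
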